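/- The zeros of V_m are the eigenvalues of the truncated N-block Jacobi matrix, with the same multiplicities: let {A_k}, {B_k}, {C_k} be N×N complex matrices with every A_k invertible, and let {V_m}_{m ≥ -1} be the N×N matrix polynomials determined by V_{-1} = 0, V_0 = I and z V_m(z) = A_m V_{m+1}(z) + B_m V_m(z) + C_m V_{m-1}(z) for all m ≥ 0. Let J_m be the mN×mN block tridiagonal matrix with diagonal blocks B_0, B_1, …, B_{m-1}, superdiagonal blocks A_0, A_1, …, A_{m-2}, and subdiagonal blocks C_1, C_2, …, C_{m-1}. Then, as polynomials in t, det(t·I_{mN} − J_m) = det(A_0)·det(A_1)⋯det(A_{m-1})·det(V_m(t)); in particular the roots of det(V_m) are exactly the eigenvalues of J_m with matching multiplicities. -/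

import Mathlib

open Polynomial Matrix Finset

noncomputable section

/-- `N × N` matrices with polynomial entries, viewed as matrix polynomials. -/
abbrev MatPoly (N : ℕ) := Matrix (Fin N) (Fin N) (Polynomial ℂ)

/-- Evaluation of a matrix polynomial at a complex number (entrywise evaluation). -/
def evalM {N : ℕ} (Q : MatPoly N) (z : ℂ) : Matrix (Fin N) (Fin N) ℂ :=
  Q.map (Polynomial.eval z)

namespace JacobiAux

variable {N : ℕ}

lemma evalM_inj {P Q : MatPoly N} (h : ∀ z, evalM P z = evalM Q z) : P = Q := by
  refine Matrix.ext fun p q => ?_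
  apply Polynomial.funext
  intro z
  have := h z
  have := congrFun (congrFun this p) q
  simpa [evalM, Matrix.map_apply] using this

lemma evalM_mul (P Q : MatPoly N) (z : ℂ) :
    evalM (P * Q) z = evalM P z * evalM Q z := by
  ext p q
  simp [evalM, Matrix.mul_apply, Polynomial.eval_finset_sum]

lemma evalM_add (P Q : MatPoly N) (z : ℂ) :
    evalM (P + Q) z = evalM P z + evalM Q z := by
  ext p q; simp [evalM]

lemma evalM_smulX (P : MatPoly N) (z : ℂ) :
    evalM ((X : ℂ[X]) • P) z = z • evalM P z := by
  ext p q; simp [evalM, Matrix.smul_apply]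

lemma evalM_mapC (M : Matrix (Fin N) (Fin N) ℂ) (z : ℂ) :
    evalM (M.map Polynomial.C) z = M := by
  ext p q; simp [evalM]


/-- The polynomial form of the recurrence. -/
lemma polyrec (A B C : ℕ → Matrix (Fin N) (Fin N) ℂ) (V : ℕ → MatPoly N)
    (hrec0 : ∀ z : ℂ, z • evalM (V 0) z = A 0 * evalM (V 1) z + B 0 * evalM (V 0) z)
    (hrec : ∀ (m : ℕ) (z : ℂ), z • evalM (V (m + 1)) z =
      A (m + 1) * evalM (V (m + 2)) z + B (m + 1) * evalM (V (m + 1)) z +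
        C (m + 1) * evalM (V m) z) (j : ℕ) :
    (X : ℂ[X]) • V j = (A j).map Polynomial.C * V (j + 1) + (B j).map Polynomial.C * V j
      + (if j = 0 then 0 else (C j).map Polynomial.C * V (j - 1)) := by
  cases j with
  | zero =>
    rw [if_pos rfl, add_zero]
    apply evalM_inj
    intro z
    rw [evalM_add, evalM_mul, evalM_mul, evalM_mapC, evalM_mapC, evalM_smulX]
    exact hrec0 z
  | succ m =>
    rw [if_neg (Nat.succ_ne_zero m), Nat.add_sub_cancel]
    apply evalM_inj
    intro z
    rw [evalM_add, evalM_add, evalM_mul, evalM_mul, evalM_mul, evalM_mapC, evalM_mapC,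
      evalM_mapC, evalM_smulX]
    exact hrec m z

/-- The truncated block Jacobi matrix. -/
def Jmat (A B C : ℕ → Matrix (Fin N) (Fin N) ℂ) (m : ℕ) :
    Matrix (Fin m × Fin N) (Fin m × Fin N) ℂ := fun pq rs =>
  if pq.1 = rs.1 then B pq.1 pq.2 rs.2
  else if (rs.1 : ℕ) = (pq.1 : ℕ) + 1 then A pq.1 pq.2 rs.2
  else if (pq.1 : ℕ) = (rs.1 : ℕ) + 1 then C pq.1 pq.2 rs.2
  else 0

/-- Block reindexing equivalence. -/
def blockEquiv (n N : ℕ) : (Fin n × Fin N) ⊕ Fin N ≃ Fin (n + 1) × Fin N where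
  toFun := Sum.elim (fun jp => (jp.1.castSucc, jp.2)) fun p => (Fin.last n, p)
  invFun := fun jp => Fin.lastCases (Sum.inr jp.2) (fun j => Sum.inl (j, jp.2)) jp.1
  left_inv := by rintro (⟨j, p⟩ | p) <;> simp
  right_inv := by
    rintro ⟨j, p⟩
    refine Fin.lastCases ?_ ?_ j <;> simp


section Step

variable (A B C : ℕ → Matrix (Fin N) (Fin N) ℂ) (V : ℕ → MatPoly N)

/-- The key column identity: multiplying a block row of the characteristic matrix of
`Jmat (n+1)` by the column of `V`'s gives `0` except in the last block row, where it
gives `A n * V (n+1)`. -/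
lemma col_identity
    (hrec0 : ∀ z : ℂ, z • evalM (V 0) z = A 0 * evalM (V 1) z + B 0 * evalM (V 0) z)
    (hrec : ∀ (m : ℕ) (z : ℂ), z • evalM (V (m + 1)) z =
      A (m + 1) * evalM (V (m + 2)) z + B (m + 1) * evalM (V (m + 1)) z +
        C (m + 1) * evalM (V m) z)
    (n : ℕ) (j : Fin (n + 1)) (p q : Fin N) :
    (∑ x : Fin (n + 1) × Fin N,
        charmatrix (Jmat A B C (n + 1)) (j, p) x * V (x.1 : ℕ) x.2 q)
      = if (j : ℕ) = n then ((A n).map Polynomial.C * V (n + 1)) p q else 0 := by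
  rw [Fintype.sum_prod_type]
  have inner : ∀ l : Fin (n + 1),
      (∑ r, charmatrix (Jmat A B C (n + 1)) (j, p) (l, r) * V (l : ℕ) r q) =
      (if l = j then
          ((X : ℂ[X]) • V (j : ℕ) - (B (j : ℕ)).map Polynomial.C * V (j : ℕ)) p q else 0)
      + (if (l : ℕ) = (j : ℕ) + 1 then
          (-((A (j : ℕ)).map Polynomial.C * V ((j : ℕ) + 1))) p q else 0)
      + (if (j : ℕ) = (l : ℕ) + 1 then
          (-((C (j : ℕ)).map Polynomial.C * V ((l : ℕ)))) p q else 0) := by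
    intro l
    by_cases hlj : l = j
    · subst hlj
      rw [if_pos rfl, if_neg (by omega), if_neg (by omega), add_zero, add_zero]
      simp [charmatrix_apply, Jmat, Matrix.diagonal_apply, Prod.ext_iff, sub_mul,
        Finset.sum_sub_distrib, ite_mul, Matrix.sub_apply, Matrix.smul_apply,
        Matrix.mul_apply, Matrix.map_apply, smul_eq_mul, Finset.sum_ite_eq]
    · rw [if_neg hlj]
      have hne : ((j, p) : Fin (n + 1) × Fin N) ≠ (l, q)  := by
        simp [Prod.ext_iff]; intro h; exact absurd h.symm hlj
      have hjlne : j ≠ l := fun h => hlj h.symm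
      have hJ : ∀ r, Jmat A B C (n + 1) (j, p) (l, r)
          = if (l : ℕ) = (j : ℕ) + 1 then A (j : ℕ) p r
            else if (j : ℕ) = (l : ℕ) + 1 then C (j : ℕ) p r else 0 := by
        intro r
        show (if j = l then _ else _) = _
        rw [if_neg hjlne]
      have hcm : ∀ r, charmatrix (Jmat A B C (n + 1)) (j, p) (l, r)
          = -Polynomial.C (Jmat A B C (n + 1) (j, p) (l, r)) := by
        intro r
        exact charmatrix_apply_ne _ _ _ (by simp [Prod.ext_iff, hjlne])
      by_cases hl1 : (l : ℕ) = (j : ℕ) + 1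
      · rw [if_pos hl1, if_neg (by omega), zero_add, add_zero]
        have hV : ((l : ℕ) : ℕ) = (j : ℕ) + 1 := hl1
        rw [show V ((j : ℕ) + 1) = V (l : ℕ) by rw [hl1]]
        simp only [hcm, hJ, if_pos hl1]
        simp [Matrix.neg_apply, Matrix.mul_apply, Matrix.map_apply, neg_mul]
      · by_cases hl2 : (j : ℕ) = (l : ℕ) + 1
        · rw [if_neg hl1, if_pos hl2, zero_add, zero_add]
          simp only [hcm, hJ, if_neg hl1, if_pos hl2]
          simp [Matrix.neg_apply, Matrix.mul_apply, Matrix.map_apply, neg_mul]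
        · rw [if_neg hl1, if_neg hl2, zero_add, zero_add]
          simp only [hcm, hJ, if_neg hl1, if_neg hl2]
          simp
  rw [Finset.sum_congr rfl fun l _ => inner l]
  rw [Finset.sum_add_distrib, Finset.sum_add_distrib, Finset.sum_ite_eq' Finset.univ j]
  rw [if_pos (Finset.mem_univ j)]
  have pr := polyrec A B C V hrec0 hrec (j : ℕ)
  have S2 : (∑ l : Fin (n + 1), if (l : ℕ) = (j : ℕ) + 1 then
      (-((A (j : ℕ)).map Polynomial.C * V ((j : ℕ) + 1))) p q else 0)
      = if (j : ℕ) = n then 0 else (-((A (j : ℕ)).map Polynomial.C * V ((j : ℕ) + 1))) p q := by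
    by_cases hjn : (j : ℕ) = n
    · rw [if_pos hjn]
      exact Finset.sum_eq_zero fun l _ => if_neg (by omega)
    · rw [if_neg hjn]
      have hjn' : (j : ℕ) + 1 < n + 1 := by omega
      have hcond : ∀ l : Fin (n + 1), ((l : ℕ) = (j : ℕ) + 1)
          = (l = (⟨(j : ℕ) + 1, hjn'⟩ : Fin (n + 1))) := by
        intro l; rw [eq_iff_iff, Fin.ext_iff]
      simp only [hcond]
      rw [Finset.sum_ite_eq' Finset.univ]
      simp
  have S3 : (∑ l : Fin (n + 1), if (j : ℕ) = (l : ℕ) + 1 then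
      (-((C (j : ℕ)).map Polynomial.C * V ((l : ℕ)))) p q else 0)
      = if (j : ℕ) = 0 then 0 else (-((C (j : ℕ)).map Polynomial.C * V ((j : ℕ) - 1))) p q := by
    by_cases hj0 : (j : ℕ) = 0
    · rw [if_pos hj0]
      exact Finset.sum_eq_zero fun l _ => if_neg (by omega)
    · rw [if_neg hj0]
      have hlt : (j : ℕ) - 1 < n + 1 := by omega
      have hcond : ∀ l : Fin (n + 1), ((j : ℕ) = (l : ℕ) + 1)
          = (l = (⟨(j : ℕ) - 1, hlt⟩ : Fin (n + 1))) := by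
        intro l; rw [eq_iff_iff, Fin.ext_iff]; simp only [Fin.val_mk]; constructor <;> intro h <;> omega
      simp only [hcond]
      rw [Finset.sum_ite_eq' Finset.univ]
      simp
  rw [S2, S3]
  by_cases hjn : (j : ℕ) = n
  · rw [hjn] at pr ⊢
    rw [if_pos rfl, if_pos rfl, add_zero]
    by_cases hj0 : n = 0
    · rw [if_pos hj0, add_zero]
      rw [if_pos hj0, add_zero] at pr
      rw [pr]
      simp [Matrix.add_apply, Matrix.sub_apply]
    · rw [if_neg hj0]
      rw [if_neg hj0] at pr
      rw [pr]
      simp only [Matrix.add_apply, Matrix.sub_apply, Matrix.neg_apply]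
      ring
  · rw [if_neg hjn, if_neg hjn]
    by_cases hj0 : (j : ℕ) = 0
    · rw [hj0] at pr ⊢
      rw [if_pos rfl, add_zero]
      rw [if_pos rfl, add_zero] at pr
      rw [pr]
      simp [Matrix.add_apply, Matrix.sub_apply, Matrix.neg_apply]
    · rw [if_neg hj0]
      rw [if_neg hj0] at pr
      rw [pr]
      simp only [Matrix.add_apply, Matrix.sub_apply, Matrix.neg_apply]
      ring


lemma Jmat_castSucc (n : ℕ) (jp kq : Fin n × Fin N) :
    Jmat A B C (n + 1) (jp.1.castSucc, jp.2) (kq.1.castSucc, kq.2) = Jmat A B C n jp kq := by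
  obtain ⟨j, p⟩ := jp; obtain ⟨k, q⟩ := kq
  simp only [Jmat, Fin.castSucc_inj, Fin.coe_castSucc]

lemma step
    (hrec0 : ∀ z : ℂ, z • evalM (V 0) z = A 0 * evalM (V 1) z + B 0 * evalM (V 0) z)
    (hrec : ∀ (m : ℕ) (z : ℂ), z • evalM (V (m + 1)) z =
      A (m + 1) * evalM (V (m + 2)) z + B (m + 1) * evalM (V (m + 1)) z +
        C (m + 1) * evalM (V m) z)
    (n : ℕ) :
    (charmatrix (Jmat A B C (n + 1))).det * (V n).det
      = (charmatrix (Jmat A B C n)).det * (Polynomial.C (A n).det * (V (n + 1)).det) := by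
  classical
  set T := charmatrix (Jmat A B C (n + 1)) with hT
  set e := blockEquiv n N with he
  set Wtop : Matrix (Fin n × Fin N) (Fin N) ℂ[X] := fun jp q => V (jp.1 : ℕ) jp.2 q with hW
  set U' := Matrix.fromBlocks (1 : Matrix (Fin n × Fin N) (Fin n × Fin N) ℂ[X]) Wtop 0 (V n)
    with hU'
  set U := U'.submatrix e.symm e.symm with hU
  have hUdet : U.det = (V n).det := by
    rw [hU, Matrix.det_submatrix_equiv_self, hU', Matrix.det_fromBlocks_zero₂₁,
      Matrix.det_one, one_mul]
  have hUapp : ∀ (x : Fin (n + 1) × Fin N) (b : (Fin n × Fin N) ⊕ Fin N),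
      U x (e b) = U' (e.symm x) b := by
    intro x b
    rw [hU, Matrix.submatrix_apply, Equiv.symm_apply_apply]
  have heinl : ∀ jp : Fin n × Fin N, e (Sum.inl jp) = (jp.1.castSucc, jp.2) := fun _ => rfl
  have heinr : ∀ p : Fin N, e (Sum.inr p) = (Fin.last n, p) := fun _ => rfl
  have hcolL : ∀ (a : Fin (n + 1) × Fin N) (k : Fin n) (q : Fin N),
      (T * U) a (e (Sum.inl (k, q))) = T a (e (Sum.inl (k, q))) := by
    intro a k q
    rw [Matrix.mul_apply, ← Equiv.sum_comp e (fun x => T a x * U x (e (Sum.inl (k, q)))),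
      Fintype.sum_sum_type]
    simp only [hUapp, Equiv.symm_apply_apply, hU', Matrix.fromBlocks_apply₁₁,
      Matrix.fromBlocks_apply₂₁, Matrix.zero_apply, mul_zero, Finset.sum_const_zero, add_zero]
    rw [Fintype.sum_prod_type]
    simp [Matrix.one_apply, Prod.ext_iff, Finset.sum_ite_eq, ite_and]
  have hcolR : ∀ (a : Fin (n + 1) × Fin N) (q : Fin N),
      (T * U) a (e (Sum.inr q)) = ∑ x : Fin (n + 1) × Fin N, T a x * V (x.1 : ℕ) x.2 q := by
    intro a q
    rw [Matrix.mul_apply, ← Equiv.sum_comp e (fun x => T a x * U x (e (Sum.inr q))),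
      ← Equiv.sum_comp e (fun x => T a x * V (x.1 : ℕ) x.2 q), Fintype.sum_sum_type,
      Fintype.sum_sum_type]
    congr 1
    · refine Finset.sum_congr rfl fun x _ => ?_
      rw [hUapp, Equiv.symm_apply_apply, heinl]
      rw [hU', Matrix.fromBlocks_apply₁₂]
      rfl
    · refine Finset.sum_congr rfl fun r _ => ?_
      rw [hUapp, Equiv.symm_apply_apply, heinr]
      simp [hU', Matrix.fromBlocks_apply₂₂, Fin.val_last]
  have key : (T * U).submatrix e e = Matrix.fromBlocks (charmatrix (Jmat A B C n)) 0
      (Matrix.of fun p kq => (T * U) (e (Sum.inr p)) (e (Sum.inl kq)))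
      ((A n).map Polynomial.C * V (n + 1)) := by
    ext x y : 1
    cases x with
    | inl jp =>
      cases y with
      | inl kq =>
        rw [Matrix.submatrix_apply, Matrix.fromBlocks_apply₁₁, hcolL _ kq.1 kq.2]
        rw [heinl, heinl, hT]
        rw [charmatrix_apply, charmatrix_apply, Jmat_castSucc]
        congr 1
        simp [Matrix.diagonal_apply, Prod.ext_iff, Fin.castSucc_inj]
      | inr q =>
        rw [Matrix.submatrix_apply, Matrix.fromBlocks_apply₁₂, hcolR, heinl]
        rw [col_identity A B C V hrec0 hrec n jp.1.castSucc jp.2 q]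
        rw [if_neg (by simpa using jp.1.isLt.ne), Matrix.zero_apply]
    | inr p =>
      cases y with
      | inl kq =>
        rfl
      | inr q =>
        rw [Matrix.submatrix_apply, Matrix.fromBlocks_apply₂₂, hcolR, heinr]
        rw [col_identity A B C V hrec0 hrec n (Fin.last n) p q, if_pos (Fin.val_last n)]
  calc T.det * (V n).det = T.det * U.det := by rw [hUdet]
    _ = (T * U).det := (Matrix.det_mul _ _).symm
    _ = ((T * U).submatrix e e).det := (Matrix.det_submatrix_equiv_self e _).symm
    _ = (charmatrix (Jmat A B C n)).det * ((A n).map Polynomial.C * V (n + 1)).det := by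
        rw [key, Matrix.det_fromBlocks_zero₁₂]
    _ = (charmatrix (Jmat A B C n)).det * (Polynomial.C (A n).det * (V (n + 1)).det) := by
        rw [Matrix.det_mul, ← RingHom.mapMatrix_apply, ← RingHom.map_det]

lemma main (hA : ∀ k, IsUnit (A k)) (hV0I : V 0 = 1)
    (hrec0 : ∀ z : ℂ, z • evalM (V 0) z = A 0 * evalM (V 1) z + B 0 * evalM (V 0) z)
    (hrec : ∀ (m : ℕ) (z : ℂ), z • evalM (V (m + 1)) z =
      A (m + 1) * evalM (V (m + 2)) z + B (m + 1) * evalM (V (m + 1)) z +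
        C (m + 1) * evalM (V m) z) :
    ∀ n, (charmatrix (Jmat A B C n)).det
        = Polynomial.C (∏ k ∈ Finset.range n, (A k).det) * (V n).det ∧ (V n).det ≠ 0 := by
  intro n
  induction n with
  | zero =>
    constructor
    · rw [Matrix.det_isEmpty, hV0I, Matrix.det_one]
      simp
    · rw [hV0I, Matrix.det_one]
      exact one_ne_zero
  | succ n ih =>
    have hstep := step A B C V hrec0 hrec n
    rw [ih.1] at hstep
    have claim1 : (charmatrix (Jmat A B C (n + 1))).det
        = Polynomial.C (∏ k ∈ Finset.range (n + 1), (A k).det) * (V (n + 1)).det := by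
      apply mul_right_cancel₀ ih.2
      rw [hstep, Finset.prod_range_succ, Polynomial.C_mul]
      ring
    refine ⟨claim1, ?_⟩
    have hchar : (charmatrix (Jmat A B C (n + 1))).det ≠ 0 := by
      have : (Matrix.charpoly (Jmat A B C (n + 1))).Monic := Matrix.charpoly_monic _
      exact this.ne_zero
    intro h0
    rw [claim1, h0, mul_zero] at hchar
    exact hchar rfl

end Step

end JacobiAux

theorem charpoly_block_jacobi_eq_det_matrix_poly
    (N : ℕ) (hN : 1 ≤ N)
    (A B C : ℕ → Matrix (Fin N) (Fin N) ℂ)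
    (hA : ∀ k, IsUnit (A k))
    (V : ℕ → MatPoly N)
    (hV0I : V 0 = 1)
    (hrec0 : ∀ z : ℂ, z • evalM (V 0) z = A 0 * evalM (V 1) z + B 0 * evalM (V 0) z)
    (hrec : ∀ (m : ℕ) (z : ℂ), z • evalM (V (m + 1)) z =
      A (m + 1) * evalM (V (m + 2)) z + B (m + 1) * evalM (V (m + 1)) z +
        C (m + 1) * evalM (V m) z)
    (m : ℕ) (hm : 1 ≤ m)
    (J : Matrix (Fin m × Fin N) (Fin m × Fin N) ℂ)
    (hJ : J = fun pq rs =>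
      if pq.1 = rs.1 then B pq.1 pq.2 rs.2
      else if (rs.1 : ℕ) = (pq.1 : ℕ) + 1 then A pq.1 pq.2 rs.2
      else if (pq.1 : ℕ) = (rs.1 : ℕ) + 1 then C pq.1 pq.2 rs.2
      else 0) :
    Matrix.charpoly J =
      Polynomial.C (∏ k ∈ Finset.range m, (A k).det) * Matrix.det (V m) := by
  have hJm : J = JacobiAux.Jmat A B C m := hJ
  rw [hJm]
  exact (JacobiAux.main A B C V hA hV0I hrec0 hrec m).1

end
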